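/- Let n ≥ 2, m_1, m_2 be positive integers with gcd(m_2, n!) = 1, and set m = m_1 m_2. Let a ∈ ℤ/mℤ and d = (d_1,...,d_n) ∈ (ℤ/mℤ)^n such that each π_{m_2}(d_i) and each π_{m_2}(d_j) − π_{m_2}(d_i) (i < j) is invertible in ℤ/m_2ℤ. Then for every positive integer s ≡ −t (mod m_2) with t ∈ {0,...,n−1}, the arithmetic simplex Δ = AS(a, m_1 d, s) of ℤ/mℤ satisfies m_Δ(x + m_1) = m_Δ(x) for all x ∈ ℤ/mℤ. -/

import Mathlib

open Finset

/-- Index set of an `n`-simplex of size `s`: all `i : Fin n → ℕ` with `∑ k, i k ≤ s - 1`,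
i.e. `∑ k, i k < s`. -/
def simplexIdx (n s : ℕ) : Finset (Fin n → ℕ) :=
  (Fintype.piFinset fun _ : Fin n => Finset.range s).filter fun i => ∑ k, i k < s

/-- The arithmetic `n`-simplex `AS(a, d, s)` as a multiset of `ZMod m`. -/
def AS (m n : ℕ) (a : ZMod m) (d : Fin n → ZMod m) (s : ℕ) : Multiset (ZMod m) :=
  (simplexIdx n s).val.map fun i => a + ∑ k, (i k : ZMod m) * d k

/-- A finite multiset of `ZMod m` is balanced if every element of `ZMod m` occurs with the
same multiplicity. -/
def IsBalanced {m : ℕ} (M : Multiset (ZMod m)) : Prop :=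
  ∀ x y : ZMod m, M.count x = M.count y

open Polynomial

namespace Stmt18Aux

lemma mem_simplexIdx {n s : ℕ} {i : Fin n → ℕ} : i ∈ simplexIdx n s ↔ ∑ k, i k < s := by
  simp only [simplexIdx, Finset.mem_filter, Fintype.mem_piFinset, Finset.mem_range]
  refine ⟨fun h => h.2, fun h => ⟨fun k => lt_of_le_of_lt ?_ h, h⟩⟩
  exact Finset.single_le_sum (f := fun k => i k) (fun _ _ => Nat.zero_le _) (Finset.mem_univ k)

noncomputable def SP (n s : ℕ) (z : Fin n → ℂ) : ℂ :=
  ∑ i ∈ simplexIdx n s, ∏ k, z k ^ i k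

noncomputable def LFS {ι : Type*} [DecidableEq ι] (s : Finset ι) (w : ι → ℂ) (e : ℕ) : ℂ :=
  ∑ k ∈ s, w k ^ e * ∏ l ∈ s.erase k, (w k - w l)⁻¹

lemma LFS_map {ι κ : Type*} [DecidableEq ι] [DecidableEq κ] (f : ι ↪ κ) (s : Finset ι)
    (w : κ → ℂ) (e : ℕ) : LFS (s.map f) w e = LFS s (w ∘ f) e := by
  unfold LFS
  rw [Finset.sum_map]
  refine Finset.sum_congr rfl fun k hk => ?_
  rw [← Finset.map_erase, Finset.prod_map]
  rfl

lemma LFS_congr_exp {ι : Type*} [DecidableEq ι] (s : Finset ι) (w : ι → ℂ) {e e' : ℕ}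
    (h : ∀ k ∈ s, w k ^ e = w k ^ e') : LFS s w e = LFS s w e' :=
  Finset.sum_congr rfl fun k hk => by rw [h k hk]

lemma LFS_rec {ι : Type*} [DecidableEq ι] {s : Finset ι} {w : ι → ℂ} (hw : Set.InjOn w s)
    {a : ι} (ha : a ∈ s) (e : ℕ) :
    LFS s w (e + 1) = w a * LFS s w e + LFS (s.erase a) w e := by
  have key : LFS s w (e + 1) - w a * LFS s w e = LFS (s.erase a) w e := by
    unfold LFS
    rw [Finset.mul_sum, ← Finset.sum_sub_distrib, ← Finset.sum_erase_add _ _ ha]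
    have hzero : w a ^ (e + 1) * ∏ l ∈ s.erase a, (w a - w l)⁻¹ -
        w a * (w a ^ e * ∏ l ∈ s.erase a, (w a - w l)⁻¹) = 0 := by ring
    rw [hzero, add_zero]
    refine Finset.sum_congr rfl fun k hk => ?_
    obtain ⟨hka, hks⟩ := Finset.mem_erase.mp hk
    have haek : a ∈ s.erase k := Finset.mem_erase.mpr ⟨fun h => hka h.symm, ha⟩
    have hkane : w k - w a ≠ 0 := sub_ne_zero_of_ne (fun h => hka (hw hks ha h))
    rw [← Finset.mul_prod_erase _ _ haek]
    have step : w k ^ (e + 1) * ((w k - w a)⁻¹ * ∏ l ∈ (s.erase k).erase a, (w k - w l)⁻¹) -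
        w a * (w k ^ e * ((w k - w a)⁻¹ * ∏ l ∈ (s.erase k).erase a, (w k - w l)⁻¹)) =
        w k ^ e * ((w k - w a) * (w k - w a)⁻¹) * ∏ l ∈ (s.erase k).erase a, (w k - w l)⁻¹ := by
      ring
    rw [step, mul_inv_cancel₀ hkane, mul_one, Finset.erase_right_comm]
  linear_combination key

lemma LFS_vanish {ι : Type*} [DecidableEq ι] {s : Finset ι} {w : ι → ℂ} (hw : Set.InjOn w s)
    {e : ℕ} (he : e + 1 < s.card) : LFS s w e = 0 := by
  have hdeg : ((X : ℂ[X]) ^ e).degree < (s.card : WithBot ℕ) := by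
    rw [degree_X_pow]
    exact_mod_cast Nat.lt_of_succ_lt he
  have h := Lagrange.eq_interpolate (v := w) hw hdeg
  have h2 := congrArg (fun p => Polynomial.coeff p (s.card - 1)) h
  simp only [Lagrange.interpolate_apply, Polynomial.finset_sum_coeff] at h2
  have hne : e ≠ s.card - 1 := by omega
  rw [Polynomial.coeff_X_pow, if_neg (Ne.symm hne)] at h2
  unfold LFS
  have h3 : ∑ b ∈ s, (Polynomial.C (Polynomial.eval (w b) ((X : ℂ[X]) ^ e)) *
      Lagrange.basis s w b).coeff (s.card - 1) =
      ∑ k ∈ s, w k ^ e * ∏ l ∈ s.erase k, (w k - w l)⁻¹ := by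
    refine Finset.sum_congr rfl fun k hk => ?_
    have hbasis : Lagrange.basis s w k =
        Polynomial.C (Lagrange.nodalWeight s w k) * Lagrange.nodal (s.erase k) w := by
      rw [Lagrange.basis_eq_prod_sub_inv_mul_nodal_div hk, Lagrange.nodal_erase_eq_nodal_div hk]
    rw [hbasis, ← mul_assoc, ← Polynomial.C_mul, Polynomial.coeff_C_mul]
    have hmonic : (Lagrange.nodal (s.erase k) w).Monic := Lagrange.nodal_monic
    have hdeg2 : (Lagrange.nodal (s.erase k) w).natDegree = s.card - 1 := by
      rw [Lagrange.natDegree_nodal, Finset.card_erase_of_mem hk]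
    rw [← hdeg2, hmonic.coeff_natDegree, mul_one, Polynomial.eval_pow, Polynomial.eval_X]
    rw [Lagrange.nodalWeight]
  rw [← h3, ← h2]

end Stmt18Aux

namespace Stmt18Aux

lemma simplexIdx_zero (n : ℕ) : simplexIdx n 0 = ∅ :=
  Finset.eq_empty_of_forall_notMem fun i hi => Nat.not_lt_zero _ (mem_simplexIdx.mp hi)

lemma simplexIdx_one (n : ℕ) : simplexIdx n 1 = {fun _ => 0} := by
  ext i
  simp only [mem_simplexIdx, Nat.lt_one_iff, Finset.sum_eq_zero_iff, Finset.mem_univ,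
    forall_true_left, Finset.mem_singleton, funext_iff]

lemma SP_one (n : ℕ) (z : Fin n → ℂ) : SP n 1 z = 1 := by
  rw [SP, simplexIdx_one, Finset.sum_singleton]
  simp

lemma SP_rec (n s : ℕ) (z : Fin (n + 1) → ℂ) :
    SP (n + 1) (s + 1) z = z 0 * SP (n + 1) s z + SP n (s + 1) (Fin.tail z) := by
  unfold SP
  rw [← Finset.sum_filter_add_sum_filter_not (simplexIdx (n + 1) (s + 1))
    (fun i => i 0 = 0), add_comm]
  congr 1
  · -- part with i 0 ≠ 0  ↦  z 0 * SP (n+1) s z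
    rw [Finset.mul_sum]
    refine Finset.sum_nbij' (fun i => Fin.cons (i 0 - 1) (Fin.tail i))
      (fun j => Fin.cons (j 0 + 1) (Fin.tail j)) ?_ ?_ ?_ ?_ ?_
    · intro i hi
      obtain ⟨hi1, hi2⟩ := Finset.mem_filter.mp hi
      rw [mem_simplexIdx] at hi1 ⊢
      rw [Fin.sum_cons]
      rw [Fin.sum_univ_succ] at hi1
      have : i 0 ≠ 0 := hi2
      simp only [Fin.tail]
      omega
    · intro j hj
      rw [mem_simplexIdx] at hj
      refine Finset.mem_filter.mpr ⟨?_, ?_⟩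
      · rw [mem_simplexIdx, Fin.sum_cons]
        rw [Fin.sum_univ_succ] at hj
        simp only [Fin.tail]
        omega
      · simp
    · intro i hi
      obtain ⟨_, hi2⟩ := Finset.mem_filter.mp hi
      have h0 : i 0 ≠ 0 := hi2
      simp only [Fin.cons_zero, Fin.tail_cons]
      rw [Nat.sub_add_cancel (Nat.one_le_iff_ne_zero.mpr h0)]
      exact Fin.cons_self_tail i
    · intro j hj
      simp only [Fin.cons_zero, Fin.tail_cons, Nat.add_sub_cancel]
      exact Fin.cons_self_tail j
    · intro i hi
      obtain ⟨_, hi2⟩ := Finset.mem_filter.mp hi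
      have h0 : i 0 ≠ 0 := hi2
      rw [Fin.prod_univ_succ, Fin.prod_univ_succ]
      simp only [Fin.cons_zero, Fin.cons_succ]
      rw [← mul_assoc, ← pow_succ']
      rw [Nat.sub_add_cancel (Nat.one_le_iff_ne_zero.mpr h0)]
      rfl
  · -- part with i 0 = 0  ↦  SP n (s+1) (tail z)
    refine Finset.sum_nbij' (fun i => Fin.tail i) (fun j => Fin.cons 0 j) ?_ ?_ ?_ ?_ ?_
    · intro i hi
      obtain ⟨hi1, hi2⟩ := Finset.mem_filter.mp hi
      rw [mem_simplexIdx] at hi1 ⊢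
      rw [Fin.sum_univ_succ] at hi1
      simp only [Fin.tail]
      omega
    · intro j hj
      rw [mem_simplexIdx] at hj
      refine Finset.mem_filter.mpr ⟨?_, ?_⟩
      · rw [mem_simplexIdx, Fin.sum_cons]
        omega
      · simp
    · intro i hi
      obtain ⟨_, hi2⟩ := Finset.mem_filter.mp hi
      have h0 : i 0 = 0 := hi2
      rw [← h0]
      exact Fin.cons_self_tail i
    · intro j hj
      exact Fin.tail_cons _ _
    · intro i hi
      obtain ⟨_, hi2⟩ := Finset.mem_filter.mp hi
      have h0 : i 0 = 0 := hi2
      rw [Fin.prod_univ_succ, h0, pow_zero, one_mul]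
      rfl

lemma snoc_comp_succ {n : ℕ} (z : Fin (n + 1) → ℂ) :
    (Fin.snoc z 1 : Fin (n + 2) → ℂ) ∘ Fin.succ = Fin.snoc (Fin.tail z) 1 := by
  funext j
  refine Fin.lastCases ?_ (fun j => ?_) j
  · show (Fin.snoc z 1 : Fin (n + 2) → ℂ) (Fin.succ (Fin.last n)) = _
    rw [Fin.succ_last, Fin.snoc_last, Fin.snoc_last]
  · show (Fin.snoc z 1 : Fin (n + 2) → ℂ) (Fin.succ (Fin.castSucc j)) = _
    rw [Fin.succ_castSucc, Fin.snoc_castSucc, Fin.snoc_castSucc]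
    rfl

lemma erase_zero_eq_map_succ (n : ℕ) :
    (Finset.univ : Finset (Fin (n + 1))).erase 0 =
      Finset.univ.map ⟨Fin.succ, Fin.succ_injective n⟩ := by
  rw [Fin.univ_succ, Finset.erase_cons]

lemma main_T : ∀ n (s' : ℕ) (z : Fin n → ℂ),
    Function.Injective (Fin.snoc z 1 : Fin (n + 1) → ℂ) →
    SP n (s' + 1) z = LFS (Finset.univ : Finset (Fin (n + 1))) (Fin.snoc z 1) (s' + n) := by
  intro n
  induction n with
  | zero =>
    intro s' z hw
    have h1 : SP 0 (s' + 1) z = 1 := by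
      rw [SP]
      have hidx : simplexIdx 0 (s' + 1) = {fun x => x.elim0} := by
        ext i
        simp only [mem_simplexIdx, Finset.mem_singleton]
        constructor
        · intro _; exact funext fun x => x.elim0
        · intro _; simp
      rw [hidx, Finset.sum_singleton]
      simp
    rw [h1, LFS, Fin.sum_univ_one]
    simp [Fin.snoc]
  | succ n ih =>
    intro s' z hw
    have hw' : Function.Injective (Fin.snoc (Fin.tail z) 1 : Fin (n + 1) → ℂ) := by
      rw [← snoc_comp_succ]
      exact hw.comp (Fin.succ_injective _)
    have hinj : Set.InjOn (Fin.snoc z 1 : Fin (n + 2) → ℂ) (Finset.univ : Finset (Fin (n+2))) :=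
      hw.injOn
    have h0mem : (0 : Fin (n + 2)) ∈ (Finset.univ : Finset (Fin (n + 2))) := Finset.mem_univ _
    have herase : ∀ e : ℕ, LFS ((Finset.univ : Finset (Fin (n + 2))).erase 0) (Fin.snoc z 1) e
        = LFS (Finset.univ : Finset (Fin (n + 1))) (Fin.snoc (Fin.tail z) 1) e := by
      intro e
      rw [erase_zero_eq_map_succ, LFS_map]
      simp only [Function.Embedding.coeFn_mk]
      rw [snoc_comp_succ]
    have hcard : ((Finset.univ : Finset (Fin (n + 2)))).card = n + 2 := by simp
    have hz0 : (Fin.snoc z 1 : Fin (n + 2) → ℂ) 0 = z 0 := by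
      show (Fin.snoc z 1 : Fin (n + 2) → ℂ) (Fin.castSucc 0) = z 0
      rw [Fin.snoc_castSucc]
    induction s' with
    | zero =>
      have hrec := LFS_rec (w := (Fin.snoc z 1 : Fin (n + 2) → ℂ)) hinj h0mem n
      have hvan : LFS (Finset.univ : Finset (Fin (n + 2))) (Fin.snoc z 1) n = 0 :=
        LFS_vanish hinj (by rw [hcard]; omega)
      have hih := ih 0 (Fin.tail z) hw'
      rw [SP_one] at hih
      rw [Nat.zero_add] at hih
      show SP (n + 1) 1 z = LFS Finset.univ (Fin.snoc z 1) (0 + (n + 1))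
      rw [SP_one, Nat.zero_add, hrec, hvan, herase, ← hih, mul_zero, zero_add]
    | succ s' ihs =>
      have hrec := LFS_rec (w := (Fin.snoc z 1 : Fin (n + 2) → ℂ)) hinj h0mem (s' + n + 1)
      have hih := ih (s' + 1) (Fin.tail z) hw'
      have e1 : s' + 1 + (n + 1) = s' + n + 1 + 1 := by omega
      have e2 : s' + 1 + n = s' + n + 1 := by omega
      have e3 : s' + (n + 1) = s' + n + 1 := by omega
      rw [e2] at hih
      show SP (n + 1) (s' + 1 + 1) z = LFS Finset.univ (Fin.snoc z 1) (s' + 1 + (n + 1))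
      rw [SP_rec, ihs, hih, e1, hrec, hz0, herase, e3]

end Stmt18Aux

namespace Stmt18Aux

lemma pow_mod_eq {M : ℕ} {ζ : ℂ} (hζ : ζ ^ M = 1) (a : ℕ) : ζ ^ (a % M) = ζ ^ a := by
  conv_rhs => rw [← Nat.div_add_mod a M]
  rw [pow_add, pow_mul, hζ, one_pow, one_mul]

lemma pow_val_add {M : ℕ} [NeZero M] {ζ : ℂ} (hζ : ζ ^ M = 1) (x y : ZMod M) :
    ζ ^ (x + y).val = ζ ^ x.val * ζ ^ y.val := by
  rw [ZMod.val_add, pow_mod_eq hζ, pow_add]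

lemma pow_val_sum {M : ℕ} [NeZero M] {ζ : ℂ} (hζ : ζ ^ M = 1) {ι : Type*} (T : Finset ι)
    (f : ι → ZMod M) : ζ ^ (∑ k ∈ T, f k).val = ∏ k ∈ T, ζ ^ (f k).val := by
  induction T using Finset.cons_induction with
  | empty => simp
  | cons a T ha ih => rw [Finset.sum_cons, Finset.prod_cons, pow_val_add hζ, ih]

lemma pow_val_nsmul {M : ℕ} [NeZero M] {ζ : ℂ} (hζ : ζ ^ M = 1) (j : ℕ) (x : ZMod M) :
    ζ ^ (((j : ZMod M) * x).val) = (ζ ^ x.val) ^ j := by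
  induction j with
  | zero => simp
  | succ j ih =>
    have : ((j + 1 : ℕ) : ZMod M) * x = (j : ZMod M) * x + x := by push_cast; ring
    rw [this, pow_val_add hζ, ih, pow_succ]

lemma pow_val_unit_eq_one {M : ℕ} [NeZero M] {ζ : ℂ} (hζ : ζ ^ M = 1) {u : ZMod M}
    (hu : IsUnit u) (h1 : ζ ^ u.val = 1) : ζ = 1 := by
  have hζ0 : ζ ≠ 0 := by
    intro h
    rw [h, zero_pow (NeZero.ne M)] at hζ
    exact zero_ne_one hζ
  have hcop : (u.val).Coprime M := by
    have : ((u.val : ℕ) : ZMod M) = u := ZMod.natCast_rightInverse u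
    rw [← ZMod.isUnit_iff_coprime, this]
    exact hu
  have hb := Nat.gcd_eq_gcd_ab u.val M
  rw [Nat.Coprime] at hcop
  rw [hcop] at hb
  have hb' : (1 : ℤ) = (u.val : ℤ) * u.val.gcdA M + (M : ℤ) * u.val.gcdB M := by
    exact_mod_cast hb
  have : ζ = ζ ^ ((1 : ℤ)) := by simp
  rw [this, hb', zpow_add₀ hζ0, zpow_mul, zpow_mul]
  have h1' : (ζ : ℂ) ^ ((u.val : ℤ)) = 1 := by
    rw [zpow_natCast, h1]
  have h2' : (ζ : ℂ) ^ ((M : ℤ)) = 1 := by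
    rw [zpow_natCast, hζ]
  rw [h1', h2', one_zpow, one_zpow, one_mul]

lemma pow_val_ne_of_unit_sub {M : ℕ} [NeZero M] {ζ : ℂ} (hζ : ζ ^ M = 1) (hζ1 : ζ ≠ 1)
    {x y : ZMod M} (hu : IsUnit (x - y)) : ζ ^ x.val ≠ ζ ^ y.val := by
  intro h
  have hζ0 : ζ ≠ 0 := by
    intro h0
    rw [h0, zero_pow (NeZero.ne M)] at hζ
    exact zero_ne_one hζ
  have hy0 : ζ ^ y.val ≠ 0 := pow_ne_zero _ hζ0
  have : ζ ^ (x - y).val * ζ ^ y.val = ζ ^ y.val := by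
    rw [← pow_val_add hζ, sub_add_cancel, h]
  have h1 : ζ ^ (x - y).val = 1 := by
    field_simp at this
    tauto
  exact hζ1 (pow_val_unit_eq_one hζ hu h1)

lemma balanced_of_charSum {M : ℕ} (hM : 0 < M) {ι : Type*} [DecidableEq ι] (T : Finset ι)
    (g : ι → ZMod M)
    (hchar : ∀ ζ : ℂ, ζ ^ M = 1 → ζ ≠ 1 → ∑ i ∈ T, ζ ^ (g i).val = 0) :
    ∀ c c' : ZMod M, (T.filter fun i => g i = c).card = (T.filter fun i => g i = c').card := by
  haveI : NeZero M := ⟨hM.ne'⟩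
  set ω : ℂ := Complex.exp (2 * Real.pi * Complex.I / M) with hω
  have hprim : IsPrimitiveRoot ω M := Complex.isPrimitiveRoot_exp M hM.ne'
  have hωM : ω ^ M = 1 := hprim.pow_eq_one
  suffices key : ∀ c : ZMod M, (M : ℂ) * ((T.filter fun i => g i = c).card : ℂ) = (T.card : ℂ) by
    intro c c'
    have h1 := key c
    have h2 := key c'
    have hM0 : (M : ℂ) ≠ 0 := Nat.cast_ne_zero.mpr hM.ne'
    have := h1.trans h2.symm
    have := mul_left_cancel₀ hM0 this
    exact_mod_cast this
  intro c
  set u := M - c.val with hu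
  have hcval : c.val < M := ZMod.val_lt c
  -- double sum
  have hD : ∑ i ∈ T, ∑ k ∈ Finset.range M, (ω ^ ((g i).val + u)) ^ k =
      ∑ k ∈ Finset.range M, ω ^ (k * u) * ∑ i ∈ T, (ω ^ k) ^ (g i).val := by
    rw [Finset.sum_comm]
    refine Finset.sum_congr rfl fun k hk => ?_
    rw [Finset.mul_sum]
    refine Finset.sum_congr rfl fun i hi => ?_
    rw [← pow_mul, ← pow_mul, ← pow_add]
    congr 1
    ring
  -- evaluate LHS termwise
  have hL : ∀ i ∈ T, ∑ k ∈ Finset.range M, (ω ^ ((g i).val + u)) ^ k =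
      if g i = c then (M : ℂ) else 0 := by
    intro i _
    by_cases hgc : g i = c
    · have : (g i).val + u = M := by rw [hgc]; omega
      rw [this, hωM, if_pos hgc]
      simp
    · have hne1 : ω ^ ((g i).val + u) ≠ 1 := by
        intro h1
        have hdvd := (hprim.pow_eq_one_iff_dvd _).mp h1
        have hgv : (g i).val < M := ZMod.val_lt _
        have h1u : 1 ≤ u := by omega
        have : (g i).val + u = M := by
          rcases hdvd with ⟨q, hq⟩
          rcases Nat.lt_or_ge q 2 with hq2 | hq2
          · interval_cases q <;> omega
          · have h2M := Nat.mul_le_mul_left M hq2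
            omega
        have : (g i).val = c.val := by omega
        exact hgc (ZMod.val_injective _ this)
      have hMone : (ω ^ ((g i).val + u)) ^ M = 1 := by
        rw [← pow_mul, Nat.mul_comm, pow_mul, hωM, one_pow]
      rw [if_neg hgc, geom_sum_eq hne1, hMone, sub_self, zero_div]
  -- evaluate RHS termwise
  have hR : ∀ k ∈ Finset.range M, k ≠ 0 → ω ^ (k * u) * ∑ i ∈ T, (ω ^ k) ^ (g i).val = 0 := by
    intro k hk hk0
    rw [Finset.mem_range] at hk
    have hωk1 : ω ^ k ≠ 1 := hprim.pow_ne_one_of_pos_of_lt hk0 hk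
    have hωkM : (ω ^ k) ^ M = 1 := by
      rw [← pow_mul, Nat.mul_comm, pow_mul, hωM, one_pow]
    rw [hchar _ hωkM hωk1, mul_zero]
  calc (M : ℂ) * ((T.filter fun i => g i = c).card : ℂ)
      = ∑ i ∈ T, if g i = c then (M : ℂ) else 0 := by
        rw [← Finset.sum_filter, Finset.sum_const, nsmul_eq_mul, mul_comm]
    _ = ∑ i ∈ T, ∑ k ∈ Finset.range M, (ω ^ ((g i).val + u)) ^ k :=
        (Finset.sum_congr rfl hL).symm
    _ = ∑ k ∈ Finset.range M, ω ^ (k * u) * ∑ i ∈ T, (ω ^ k) ^ (g i).val := hD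
    _ = (T.card : ℂ) := by
        rw [Finset.sum_eq_single_of_mem 0 (Finset.mem_range.mpr hM) (fun k hk hk0 => hR k hk hk0)]
        simp

end Stmt18Aux

namespace Stmt18Aux

lemma snoc_injective {n : ℕ} {z : Fin n → ℂ} (h1 : ∀ k, z k ≠ 1)
    (hd : ∀ j k : Fin n, j ≠ k → z j ≠ z k) :
    Function.Injective (Fin.snoc z 1 : Fin (n + 1) → ℂ) := by
  intro p q hpq
  rcases Fin.eq_castSucc_or_eq_last p with ⟨p', rfl⟩ | rfl <;>
    rcases Fin.eq_castSucc_or_eq_last q with ⟨q', rfl⟩ | rfl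
  · rw [Fin.snoc_castSucc, Fin.snoc_castSucc] at hpq
    by_cases hpq' : p' = q'
    · rw [hpq']
    · exact absurd hpq (hd _ _ hpq')
  · rw [Fin.snoc_castSucc, Fin.snoc_last] at hpq
    exact absurd hpq (h1 p')
  · rw [Fin.snoc_last, Fin.snoc_castSucc] at hpq
    exact absurd hpq.symm (h1 q')
  · rfl

end Stmt18Aux

open Stmt18Aux

/-- Key lemma: with `m = m₁ m₂`, `gcd(m₂, n!) = 1`, projections mod `m₂` of the `dᵢ` and of
their differences invertible, and `s ≡ −t (mod m₂)` with `t ∈ [0, n−1]`, the multiplicity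
function of `Δ = AS(a, m₁ d, s)` in `ZMod (m₁ m₂)` satisfies `m_Δ(x + m₁) = m_Δ(x)`. -/
theorem stmt18 (n m₁ m₂ : ℕ) (hn : 2 ≤ n) (h₁ : 0 < m₁) (h₂ : 0 < m₂)
    (hgcd : Nat.gcd m₂ n.factorial = 1)
    (a : ZMod (m₁ * m₂)) (d : Fin n → ZMod (m₁ * m₂))
    (hd : ∀ i, IsUnit ((ZMod.castHom (dvd_mul_left m₂ m₁) (ZMod m₂)) (d i)))
    (hdiff : ∀ i j : Fin n, i < j →
      IsUnit ((ZMod.castHom (dvd_mul_left m₂ m₁) (ZMod m₂)) (d j) -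
        (ZMod.castHom (dvd_mul_left m₂ m₁) (ZMod m₂)) (d i)))
    (s : ℕ) (hs : 0 < s) (ht : ∃ t < n, (s : ZMod m₂) = -(t : ZMod m₂)) :
    ∀ x : ZMod (m₁ * m₂),
      (AS (m₁ * m₂) n a (fun k => (m₁ : ZMod (m₁ * m₂)) * d k) s).count
          (x + (m₁ : ZMod (m₁ * m₂))) =
        (AS (m₁ * m₂) n a (fun k => (m₁ : ZMod (m₁ * m₂)) * d k) s).count x := by
  classical
  haveI : NeZero m₂ := ⟨h₂.ne'⟩
  haveI : NeZero (m₁ * m₂) := ⟨(Nat.mul_pos h₁ h₂).ne'⟩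
  obtain ⟨t, htn, hts⟩ := ht
  set π := ZMod.castHom (dvd_mul_left m₂ m₁) (ZMod m₂) with hπ
  set E : Fin n → ZMod m₂ := fun k => π (d k) with hE
  set g : (Fin n → ℕ) → ZMod m₂ := fun i => ∑ k, ((i k : ℕ) : ZMod m₂) * E k with hg
  -- additive hom φ : ZMod m₂ →+ ZMod (m₁ m₂), c ↦ m₁ * c-lift
  set f₀ : ℤ →+ ZMod (m₁ * m₂) :=
    { toFun := fun z => (m₁ : ZMod (m₁ * m₂)) * (z : ZMod (m₁ * m₂)),
      map_zero' := by simp,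
      map_add' := fun x y => by push_cast; ring } with hf₀def
  have hf₀ : f₀ ((m₂ : ℕ) : ℤ) = 0 := by
    simp only [hf₀def, AddMonoidHom.coe_mk, ZeroHom.coe_mk]
    push_cast
    rw [← Nat.cast_mul, ZMod.natCast_self]
  set φ : ZMod m₂ →+ ZMod (m₁ * m₂) := ZMod.lift m₂ ⟨f₀, hf₀⟩ with hφdef
  have hφ_int : ∀ z : ℤ, φ ((z : ZMod m₂)) =
      (m₁ : ZMod (m₁ * m₂)) * (z : ZMod (m₁ * m₂)) := fun z => ZMod.lift_coe _ _ z
  have hφπ : ∀ c : ZMod (m₁ * m₂), φ (π c) = (m₁ : ZMod (m₁ * m₂)) * c := by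
    intro c
    obtain ⟨z, rfl⟩ := ZMod.intCast_surjective c
    rw [map_intCast, hφ_int]
  have hφ1 : φ 1 = (m₁ : ZMod (m₁ * m₂)) := by
    have h := hφ_int 1
    simpa using h
  have hφinj : Function.Injective φ := by
    have hzero : ∀ cc : ZMod m₂, φ cc = 0 → cc = 0 := by
      intro cc hcc
      have hval : (((cc.val : ℕ) : ℤ) : ZMod m₂) = cc := by
        push_cast
        exact ZMod.natCast_rightInverse cc
      rw [← hval, hφ_int] at hcc
      have hcast : ((m₁ * cc.val : ℕ) : ZMod (m₁ * m₂)) = 0 := by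
        push_cast at hcc ⊢
        exact hcc
      rw [ZMod.natCast_eq_zero_iff] at hcast
      have hdvd2 : m₂ ∣ cc.val := (Nat.mul_dvd_mul_iff_left h₁).mp hcast
      have hlt : cc.val < m₂ := ZMod.val_lt cc
      have : cc.val = 0 := Nat.eq_zero_of_dvd_of_lt hdvd2 hlt
      rw [← hval]
      simp [this]
    intro u v huv
    have := hzero (u - v) (by rw [map_sub, huv, sub_self])
    exact sub_eq_zero.mp this
  -- element identity
  have hElem : ∀ i : Fin n → ℕ,
      a + ∑ k, ((i k : ℕ) : ZMod (m₁ * m₂)) * ((m₁ : ZMod (m₁ * m₂)) * d k) = a + φ (g i) := by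
    intro i
    congr 1
    rw [hg]
    simp only []
    rw [map_sum]
    refine Finset.sum_congr rfl fun k _ => ?_
    have h1 : ((i k : ℕ) : ZMod m₂) * E k = (i k) • E k := by rw [nsmul_eq_mul]
    rw [h1, map_nsmul, hφπ (d k), nsmul_eq_mul]
  -- count formula
  have hcount : ∀ y : ZMod (m₁ * m₂),
      (AS (m₁ * m₂) n a (fun k => (m₁ : ZMod (m₁ * m₂)) * d k) s).count y
        = ((simplexIdx n s).filter (fun i => y = a + φ (g i))).card := by
    intro y
    rw [AS, Multiset.count_map]
    have hc : ((simplexIdx n s).filter (fun i => y = a + φ (g i))).card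
        = Multiset.card ((simplexIdx n s).val.filter (fun i => y = a + φ (g i))) := by
      rw [Finset.card, Finset.filter_val]
    rw [hc]
    congr 1
    apply Multiset.filter_congr
    intro i _
    rw [hElem i]
  -- character sums vanish
  have hchar : ∀ ζ : ℂ, ζ ^ m₂ = 1 → ζ ≠ 1 → ∑ i ∈ simplexIdx n s, ζ ^ ((g i)).val = 0 := by
    intro ζ hζM hζ1
    set z : Fin n → ℂ := fun k => ζ ^ (E k).val with hz
    have hstep : ∀ i ∈ simplexIdx n s, ζ ^ ((g i)).val = ∏ k, z k ^ i k := by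
      intro i _
      rw [hg]
      simp only []
      rw [pow_val_sum hζM]
      exact Finset.prod_congr rfl fun k _ => pow_val_nsmul hζM (i k) (E k)
    rw [Finset.sum_congr rfl hstep]
    have hzunit : ∀ k, z k ≠ 1 := fun k h => hζ1 (pow_val_unit_eq_one hζM (hd k) h)
    have hzdiff : ∀ j k : Fin n, j ≠ k → z j ≠ z k := by
      intro j k hjk h
      rcases lt_or_gt_of_ne hjk with hlt | hgt
      · have hu : IsUnit (E j - E k) := by
          have := (hdiff j k hlt).neg
          rwa [neg_sub] at this
        exact pow_val_ne_of_unit_sub hζM hζ1 hu h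
      · exact pow_val_ne_of_unit_sub hζM hζ1 (hdiff k j hgt) h
    have hwinj : Function.Injective (Fin.snoc z 1 : Fin (n + 1) → ℂ) :=
      snoc_injective hzunit hzdiff
    obtain ⟨s', rfl⟩ : ∃ s', s = s' + 1 := ⟨s - 1, by omega⟩
    have hmain := main_T n s' z hwinj
    show SP n (s' + 1) z = 0
    rw [hmain]
    have hwM : ∀ k : Fin (n + 1), (Fin.snoc z 1 : Fin (n + 1) → ℂ) k ^ m₂ = 1 := by
      intro k
      rcases Fin.eq_castSucc_or_eq_last k with ⟨k', rfl⟩ | rfl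
      · rw [Fin.snoc_castSucc]
        show (ζ ^ (E k').val) ^ m₂ = 1
        rw [← pow_mul, Nat.mul_comm, pow_mul, hζM, one_pow]
      · rw [Fin.snoc_last, one_pow]
    have hdvd : m₂ ∣ s' + 1 + t := by
      have hc : ((s' + 1 + t : ℕ) : ZMod m₂) = 0 := by
        push_cast at hts ⊢
        rw [hts]
        ring
      exact (ZMod.natCast_eq_zero_iff _ _).mp hc
    have hmodeq : (s' + n) % m₂ = (n - 1 - t) % m₂ := by
      have hle : n - 1 - t ≤ s' + n := by omega
      have hsub : (s' + n) - (n - 1 - t) = s' + 1 + t := by omega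
      exact ((Nat.modEq_iff_dvd' hle).mpr (by rw [hsub]; exact hdvd)).symm
    have hmod : ∀ k ∈ (Finset.univ : Finset (Fin (n + 1))),
        (Fin.snoc z 1 : Fin (n + 1) → ℂ) k ^ (s' + n) =
        (Fin.snoc z 1 : Fin (n + 1) → ℂ) k ^ (n - 1 - t) := by
      intro k _
      rw [← pow_mod_eq (hwM k) (s' + n), ← pow_mod_eq (hwM k) (n - 1 - t), hmodeq]
    rw [LFS_congr_exp _ _ hmod]
    apply LFS_vanish hwinj.injOn
    rw [Finset.card_univ, Fintype.card_fin]
    omega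
  have hbal := balanced_of_charSum h₂ (simplexIdx n s) g hchar
  -- conclude
  intro x
  rw [hcount (x + (m₁ : ZMod (m₁ * m₂))), hcount x]
  by_cases hx : ∃ c : ZMod m₂, x - a = φ c
  · obtain ⟨c, hc⟩ := hx
    have hfe1 : ∀ i ∈ simplexIdx n s, (x = a + φ (g i)) ↔ (g i = c) := by
      intro i _
      constructor
      · intro h
        apply hφinj
        rw [← hc, h]
        ring
      · intro h
        rw [h, ← hc]
        ring
    have hfe2 : ∀ i ∈ simplexIdx n s, (x + (m₁ : ZMod (m₁ * m₂)) = a + φ (g i)) ↔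
        (g i = c + 1) := by
      intro i _
      constructor
      · intro h
        apply hφinj
        have h1 : φ (g i) = x + (m₁ : ZMod (m₁ * m₂)) - a := by rw [h]; ring
        rw [h1, map_add, hφ1, ← hc]
        ring
      · intro h
        rw [h, map_add, hφ1, ← hc]
        ring
    rw [Finset.filter_congr hfe2, Finset.filter_congr hfe1]
    exact hbal (c + 1) c
  · push_neg at hx
    have h1 : ∀ i ∈ simplexIdx n s, ¬ (x = a + φ (g i)) := by
      intro i _ h
      exact hx (g i) (by rw [h]; ring)
    have h2 : ∀ i ∈ simplexIdx n s, ¬ (x + (m₁ : ZMod (m₁ * m₂)) = a + φ (g i)) := by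
      intro i _ h
      refine hx (g i - 1) ?_
      rw [map_sub, hφ1]
      have h3 : φ (g i) = x + (m₁ : ZMod (m₁ * m₂)) - a := by rw [h]; ring
      rw [h3]
      ring
    rw [Finset.filter_false_of_mem h1, Finset.filter_false_of_mem h2]
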